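/- A Tanner graph of a binary parity-check matrix containing a z×z circulant with column weight at least 3 (with z ≥ 3 and distinct shift values) contains a cycle of length at most 6; in particular its girth is at most 6. -/

import Mathlib

/-- The Tanner graph of a binary matrix `H`: the bipartite graph on rows (check nodes)
and columns (variable nodes), with an edge between row `r` and column `c` iff
`H r c = 1`. -/
def tannerGraph {R C : Type*} (H : Matrix R C (ZMod 2)) : SimpleGraph (R ⊕ C) where
  Adj x y :=
    (∃ r c, x = Sum.inl r ∧ y = Sum.inr c ∧ H r c = 1) ∨
    (∃ r c, x = Sum.inr c ∧ y = Sum.inl r ∧ H r c = 1)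
  symm := by
    constructor
    rintro x y (⟨r, c, hx, hy, h1⟩ | ⟨r, c, hx, hy, h1⟩)
    · exact Or.inr ⟨r, c, hy, hx, h1⟩
    · exact Or.inl ⟨r, c, hy, hx, h1⟩
  loopless := by
    constructor
    rintro x (⟨r, c, hx, hy, h1⟩ | ⟨r, c, hx, hy, h1⟩) <;> subst hx <;> simp_all

/-- If a binary parity-check matrix `H` contains a `z × z` circulant (`z ≥ 3`) with three
distinct shift values `s₁, s₂, s₃` (column weight at least 3), embedded via injective row
and column maps `ρ`, `γ`, then the Tanner graph of `H` has a cycle of length at most 6;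
in particular its girth is at most 6. -/
theorem stmt_18 {R C : Type*} (H : Matrix R C (ZMod 2)) (z : ℕ) (hz : 3 ≤ z)
    (s₁ s₂ s₃ : ZMod z) (h12 : s₁ ≠ s₂) (h13 : s₁ ≠ s₃) (h23 : s₂ ≠ s₃)
    (ρ : ZMod z → R) (γ : ZMod z → C)
    (hρ : Function.Injective ρ) (hγ : Function.Injective γ)
    (hcirc : ∀ c : ZMod z, ∀ s ∈ ({s₁, s₂, s₃} : Finset (ZMod z)),
      H (ρ (c + s)) (γ c) = 1) :
    (tannerGraph H).girth ≤ 6 := by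
  classical
  set G := tannerGraph H with hG
  have adj : ∀ (x : ZMod z) (s : ZMod z), s ∈ ({s₁, s₂, s₃} : Finset (ZMod z)) →
      G.Adj (Sum.inr (γ x)) (Sum.inl (ρ (x + s))) := by
    intro x s hs
    exact Or.inr ⟨ρ (x + s), γ x, rfl, rfl, hcirc x s hs⟩
  have hs1 : s₁ ∈ ({s₁, s₂, s₃} : Finset (ZMod z)) := by simp
  have hs2 : s₂ ∈ ({s₁, s₂, s₃} : Finset (ZMod z)) := by simp
  have hs3 : s₃ ∈ ({s₁, s₂, s₃} : Finset (ZMod z)) := by simp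
  -- vertices of the 6-cycle
  have e1 : G.Adj (Sum.inr (γ 0)) (Sum.inl (ρ s₂)) := by
    have := adj 0 s₂ hs2; rwa [zero_add] at this
  have e2 : G.Adj (Sum.inl (ρ s₂)) (Sum.inr (γ (s₂ - s₁))) := by
    have := adj (s₂ - s₁) s₁ hs1
    rw [sub_add_cancel] at this
    exact this.symm
  have e3 : G.Adj (Sum.inr (γ (s₂ - s₁))) (Sum.inl (ρ (s₂ + s₃ - s₁))) := by
    have := adj (s₂ - s₁) s₃ hs3
    have hx : s₂ - s₁ + s₃ = s₂ + s₃ - s₁ := by ring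
    rwa [hx] at this
  have e4 : G.Adj (Sum.inl (ρ (s₂ + s₃ - s₁))) (Sum.inr (γ (s₃ - s₁))) := by
    have := adj (s₃ - s₁) s₂ hs2
    have hx : s₃ - s₁ + s₂ = s₂ + s₃ - s₁ := by ring
    rw [hx] at this
    exact this.symm
  have e5 : G.Adj (Sum.inr (γ (s₃ - s₁))) (Sum.inl (ρ s₃)) := by
    have := adj (s₃ - s₁) s₁ hs1
    rwa [sub_add_cancel] at this
  have e6 : G.Adj (Sum.inl (ρ s₃)) (Sum.inr (γ 0)) := by
    have := adj 0 s₃ hs3; rw [zero_add] at this; exact this.symm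
  -- the walk
  let w : G.Walk (Sum.inr (γ 0)) (Sum.inr (γ 0)) :=
    SimpleGraph.Walk.cons e1 (SimpleGraph.Walk.cons e2 (SimpleGraph.Walk.cons e3
      (SimpleGraph.Walk.cons e4 (SimpleGraph.Walk.cons e5
        (SimpleGraph.Walk.cons e6 SimpleGraph.Walk.nil)))))
  -- distinctness of the vertices
  have hc0d : γ 0 ≠ γ (s₂ - s₁) := fun h => h12 (by have := hγ h; rw [eq_comm, sub_eq_zero, eq_comm] at this; exact this)
  have hc0e : γ 0 ≠ γ (s₃ - s₁) := fun h => h13 (by have := hγ h; rw [eq_comm, sub_eq_zero, eq_comm] at this; exact this)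
  have hcde : γ (s₂ - s₁) ≠ γ (s₃ - s₁) := fun h => h23 (by have := hγ h; rwa [sub_left_inj] at this)
  have hr23 : ρ s₂ ≠ ρ s₃ := fun h => h23 (hρ h)
  have hr2m : ρ s₂ ≠ ρ (s₂ + s₃ - s₁) := fun h => h13 (by have := hγ; have h' := hρ h; rw [eq_comm, sub_eq_iff_eq_add] at h'; exact (add_left_cancel h').symm)
  have hr3m : ρ s₃ ≠ ρ (s₂ + s₃ - s₁) := fun h => h12 (by have h' := hρ h; rw [eq_comm, sub_eq_iff_eq_add, add_comm s₂ s₃] at h'; exact (add_left_cancel h').symm)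
  have hc0d' := hc0d.symm
  have hc0e' := hc0e.symm
  have hcde' := hcde.symm
  have hr23' := hr23.symm
  have hr2m' := hr2m.symm
  have hr3m' := hr3m.symm
  have hw : w.IsCycle := by
    constructor
    · constructor
      · rw [SimpleGraph.Walk.isTrail_def]
        simp only [w, SimpleGraph.Walk.edges_cons, SimpleGraph.Walk.edges_nil,
          List.nodup_cons, List.mem_cons, List.not_mem_nil, or_false,
          List.nodup_nil, and_true, Sym2.eq, Sym2.rel_iff', Prod.mk.injEq, Prod.swap_prod_mk,
          Sum.inl.injEq, Sum.inr.injEq, reduceCtorEq, false_and, and_false, false_or,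
          not_false_eq_true, and_true, true_and, not_or, ne_eq]
        tauto
      · simp [w]
    · simp only [w, SimpleGraph.Walk.support_cons, SimpleGraph.Walk.support_nil,
        List.tail_cons, List.nodup_cons, List.mem_cons, List.not_mem_nil,
        or_false, List.nodup_nil, and_true, Sum.inl.injEq, Sum.inr.injEq, reduceCtorEq,
        not_or, ne_eq, false_or, or_false, not_false_eq_true, and_true, true_and]
      tauto
  have hlen : w.length = 6 := by simp [w]
  have hegirth : G.egirth ≤ 6 := by
    calc G.egirth ≤ w.length := by
          refine iInf_le_of_le (Sum.inr (γ 0)) ?_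
          exact iInf_le_of_le w (iInf_le_of_le hw le_rfl)
      _ = 6 := by rw [hlen]; rfl
  have : G.girth = G.egirth.toNat := rfl
  rw [this]
  calc G.egirth.toNat ≤ (6 : ℕ∞).toNat := ENat.toNat_le_toNat hegirth (by simp)
    _ = 6 := rfl
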